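/- The boundariness of a state ϱ of a finite-dimensional quantum system equals the minimal eigenvalue of its density operator: b(ϱ) = λ_min(ϱ). In particular the maximum value b(ϱ) = 1/d over all states on ℋ_d is achieved only by the maximally mixed state ϱ = I/d. -/

import Mathlib

open Matrix
open scoped ComplexOrder

/-- The weight function `t_y(x) = sup{ t ∈ [0,1) : (y - t·x)/(1-t) ∈ Z }`. -/
noncomputable def weight {V : Type*} [AddCommGroup V] [Module ℝ V] (Z : Set V) (y x : V) : ℝ :=
  sSup {t : ℝ | 0 ≤ t ∧ t < 1 ∧ (1 - t)⁻¹ • (y - t • x) ∈ Z}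

/-- The boundariness `b(y) = inf_{x ∈ Z} t_y(x)`. -/
noncomputable def bdness {V : Type*} [AddCommGroup V] [Module ℝ V] (Z : Set V) (y : V) : ℝ :=
  sInf (weight Z y '' Z)


variable {d : ℕ}

lemma rsmulM (t : ℝ) (M : Matrix (Fin d) (Fin d) ℂ) : t • M = (t : ℂ) • M := by
  ext i j
  simp [Matrix.smul_apply, Complex.real_smul]

lemma csmul_psd {c : ℝ} (hc : 0 ≤ c) {M : Matrix (Fin d) (Fin d) ℂ} (hM : M.PosSemidef) :
    ((c : ℂ) • M).PosSemidef := by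
  refine Matrix.PosSemidef.of_dotProduct_mulVec_nonneg ?_ ?_
  · have := hM.1
    unfold Matrix.IsHermitian at *
    rw [Matrix.conjTranspose_smul, this]
    simp
  · intro x
    rw [Matrix.smul_mulVec, dotProduct_smul, smul_eq_mul]
    exact mul_nonneg (Complex.zero_le_real.2 hc) (hM.dotProduct_mulVec_nonneg x)

lemma trace_eq_sum_eig (A : Matrix (Fin d) (Fin d) ℂ) (hA : A.IsHermitian) :
    A.trace = ((∑ i, hA.eigenvalues i : ℝ) : ℂ) := by
  conv_lhs => rw [hA.spectral_theorem]
  rw [Unitary.conjStarAlgAut_apply, Matrix.trace_mul_cycle,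
    show (star (hA.eigenvectorUnitary : Matrix (Fin d) (Fin d) ℂ)) *
      (hA.eigenvectorUnitary : Matrix (Fin d) (Fin d) ℂ) = 1 from
      Matrix.mem_unitaryGroup_iff'.mp hA.eigenvectorUnitary.2, one_mul, Matrix.trace_diagonal]
  push_cast
  rfl

lemma sub_smul_one_psd (A : Matrix (Fin d) (Fin d) ℂ) (hA : A.IsHermitian) {c : ℝ}
    (h : ∀ i, c ≤ hA.eigenvalues i) : (A - (c : ℂ) • 1).PosSemidef := by
  have hU : (hA.eigenvectorUnitary : Matrix (Fin d) (Fin d) ℂ) *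
      star (hA.eigenvectorUnitary : Matrix (Fin d) (Fin d) ℂ) = 1 :=
    Matrix.mem_unitaryGroup_iff.mp hA.eigenvectorUnitary.2
  have key : A - (c : ℂ) • 1 = (hA.eigenvectorUnitary : Matrix (Fin d) (Fin d) ℂ) *
      diagonal (fun i => ((hA.eigenvalues i - c : ℝ) : ℂ)) *
      star (hA.eigenvectorUnitary : Matrix (Fin d) (Fin d) ℂ) := by
    have hd : diagonal (fun i => ((hA.eigenvalues i - c : ℝ) : ℂ)) =
        diagonal (RCLike.ofReal ∘ hA.eigenvalues) - (c : ℂ) • 1 := by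
      ext i j
      by_cases hij : i = j <;>
        simp [Matrix.diagonal_apply, hij, Matrix.one_apply, Matrix.smul_apply] <;> push_cast <;> ring
    rw [hd, Matrix.mul_sub, Matrix.sub_mul]
    rw [Matrix.mul_smul, mul_one, Matrix.smul_mul, hU]
    conv_lhs => rw [hA.spectral_theorem]
    rw [Unitary.conjStarAlgAut_apply]
  rw [key, Matrix.star_eq_conjTranspose]
  exact (posSemidef_diagonal_iff.mpr fun i => Complex.zero_le_real.2 (by linarith [h i])).mul_mul_conjTranspose_same _

lemma smul_one_sub_psd (A : Matrix (Fin d) (Fin d) ℂ) (hA : A.IsHermitian) {c : ℝ}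
    (h : ∀ i, hA.eigenvalues i ≤ c) : ((c : ℂ) • 1 - A).PosSemidef := by
  have hU : (hA.eigenvectorUnitary : Matrix (Fin d) (Fin d) ℂ) *
      star (hA.eigenvectorUnitary : Matrix (Fin d) (Fin d) ℂ) = 1 :=
    Matrix.mem_unitaryGroup_iff.mp hA.eigenvectorUnitary.2
  have key : (c : ℂ) • 1 - A = (hA.eigenvectorUnitary : Matrix (Fin d) (Fin d) ℂ) *
      diagonal (fun i => ((c - hA.eigenvalues i : ℝ) : ℂ)) *
      star (hA.eigenvectorUnitary : Matrix (Fin d) (Fin d) ℂ) := by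
    have hd : diagonal (fun i => ((c - hA.eigenvalues i : ℝ) : ℂ)) =
        (c : ℂ) • 1 - diagonal (RCLike.ofReal ∘ hA.eigenvalues) := by
      ext i j
      by_cases hij : i = j <;>
        simp [Matrix.diagonal_apply, hij, Matrix.one_apply, Matrix.smul_apply] <;> push_cast <;> ring
    rw [hd, Matrix.mul_sub, Matrix.sub_mul]
    rw [Matrix.mul_smul, mul_one, Matrix.smul_mul, hU]
    conv_lhs => rw [hA.spectral_theorem]
    rw [Unitary.conjStarAlgAut_apply]
  rw [key, Matrix.star_eq_conjTranspose]
  exact (posSemidef_diagonal_iff.mpr fun i => Complex.zero_le_real.2 (by linarith [h i])).mul_mul_conjTranspose_same _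

lemma sum_eig_eq_one {x : Matrix (Fin d) (Fin d) ℂ} (hx : x.PosSemidef) (htx : x.trace = 1) :
    ∑ i, hx.isHermitian.eigenvalues i = 1 := by
  have := trace_eq_sum_eig x hx.isHermitian
  rw [htx] at this
  exact_mod_cast this.symm

lemma eig_le_one {x : Matrix (Fin d) (Fin d) ℂ} (hx : x.PosSemidef) (htx : x.trace = 1)
    (j : Fin d) : hx.isHermitian.eigenvalues j ≤ 1 := by
  rw [← sum_eig_eq_one hx htx]
  exact Finset.single_le_sum (fun i _ => hx.eigenvalues_nonneg i) (Finset.mem_univ j)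

lemma mem_aux {ϱ : Matrix (Fin d) (Fin d) ℂ} (hpos : ϱ.PosSemidef) (htr : ϱ.trace = 1)
    {x : Matrix (Fin d) (Fin d) ℂ}
    (hx : x ∈ {ρ : Matrix (Fin d) (Fin d) ℂ | ρ.PosSemidef ∧ ρ.trace = 1}) {t : ℝ}
    (h0 : 0 ≤ t) (h1 : t < 1) (hle : ∀ i, t ≤ hpos.isHermitian.eigenvalues i) :
    (1 - t)⁻¹ • (ϱ - t • x) ∈ {ρ : Matrix (Fin d) (Fin d) ℂ | ρ.PosSemidef ∧ ρ.trace = 1} := by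
  obtain ⟨hxp, hxt⟩ := hx
  have hts : (1 : ℝ) - t ≠ 0 := by linarith
  have hpsd : (ϱ - (t : ℂ) • x).PosSemidef := by
    have h1x : ((1 : ℂ) • 1 - x).PosSemidef := by
      have := smul_one_sub_psd x hxp.isHermitian (fun i => eig_le_one hxp hxt i)
      simpa using this
    have h2 : ((t : ℂ) • ((1 : ℂ) • 1 - x)).PosSemidef := csmul_psd h0 h1x
    have h3 := (sub_smul_one_psd ϱ hpos.isHermitian hle).add h2
    have he : ϱ - (t : ℂ) • x = (ϱ - (t : ℂ) • 1) + (t : ℂ) • ((1 : ℂ) • 1 - x) := by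
      rw [one_smul, smul_sub]; abel
    rw [he]
    exact h3
  constructor
  · show ((1 - t)⁻¹ • (ϱ - t • x)).PosSemidef
    rw [rsmulM, rsmulM]
    exact csmul_psd (inv_nonneg.mpr (by linarith)) hpsd
  · show ((1 - t)⁻¹ • (ϱ - t • x)).trace = 1
    rw [rsmulM, rsmulM, Matrix.trace_smul, Matrix.trace_sub, Matrix.trace_smul, htr, hxt,
      smul_eq_mul, smul_eq_mul, mul_one]
    push_cast
    exact inv_mul_cancel₀ (by exact_mod_cast hts)

lemma rsmulV {d : ℕ} (t : ℝ) (v : Fin d → ℂ) : t • v = (t : ℂ) • v := by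
  ext i; simp [Complex.real_smul]

theorem bdness_state_eq_min_eigenvalue {d : ℕ} [NeZero d]
    (ϱ : Matrix (Fin d) (Fin d) ℂ) (hpos : ϱ.PosSemidef) (htr : ϱ.trace = 1) :
    (bdness {ρ : Matrix (Fin d) (Fin d) ℂ | ρ.PosSemidef ∧ ρ.trace = 1} ϱ =
      ⨅ i, hpos.isHermitian.eigenvalues i) ∧
    (bdness {ρ : Matrix (Fin d) (Fin d) ℂ | ρ.PosSemidef ∧ ρ.trace = 1} ϱ = 1 / d →
      ϱ = ((d : ℂ))⁻¹ • 1) := by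
  classical
  set Z := {ρ : Matrix (Fin d) (Fin d) ℂ | ρ.PosSemidef ∧ ρ.trace = 1} with hZ
  set lam : ℝ := ⨅ i, hpos.isHermitian.eigenvalues i with hlam
  obtain ⟨i₀, hi₀⟩ := exists_eq_ciInf_of_finite (f := fun i => hpos.isHermitian.eigenvalues i)
  rw [← hlam] at hi₀
  have hlam_le : ∀ i, lam ≤ hpos.isHermitian.eigenvalues i := fun i =>
    ciInf_le (Set.finite_range _).bddBelow i
  have hlam0 : 0 ≤ lam := hi₀ ▸ hpos.eigenvalues_nonneg i₀
  have hlam1 : lam ≤ 1 := by rw [← hi₀]; exact eig_le_one hpos htr i₀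
  have hϱZ : ϱ ∈ Z := ⟨hpos, htr⟩
  have hS0 : ∀ x : Matrix (Fin d) (Fin d) ℂ,
      (0 : ℝ) ∈ {t : ℝ | 0 ≤ t ∧ t < 1 ∧ (1 - t)⁻¹ • (ϱ - t • x) ∈ Z} := by
    intro x
    refine ⟨le_refl 0, one_pos, ?_⟩
    simpa using hϱZ
  have hSbdd : ∀ x : Matrix (Fin d) (Fin d) ℂ,
      BddAbove {t : ℝ | 0 ≤ t ∧ t < 1 ∧ (1 - t)⁻¹ • (ϱ - t • x) ∈ Z} :=
    fun x => ⟨1, fun t ht => ht.2.1.le⟩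
  have hwnn : ∀ x : Matrix (Fin d) (Fin d) ℂ, 0 ≤ weight Z ϱ x := fun x =>
    le_csSup (hSbdd x) (hS0 x)
  have hlb : ∀ x ∈ Z, lam ≤ weight Z ϱ x := by
    intro x hxZ
    by_cases h : lam < 1
    · exact le_csSup (hSbdd x) ⟨hlam0, h, mem_aux hpos htr hxZ hlam0 h hlam_le⟩
    · push_neg at h
      have hlam_eq : lam = 1 := le_antisymm hlam1 h
      rw [hlam_eq]
      by_contra hs
      push_neg at hs
      have hs0 : 0 ≤ weight Z ϱ x := hwnn x
      set t := (weight Z ϱ x + 1) / 2 with hta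
      have ht0 : 0 ≤ t := by rw [hta]; linarith
      have ht1 : t < 1 := by rw [hta]; linarith
      have htlam : ∀ i, t ≤ hpos.isHermitian.eigenvalues i := fun i => by
        have := hlam_le i; rw [hlam_eq] at this; linarith
      have : t ≤ weight Z ϱ x :=
        le_csSup (hSbdd x) ⟨ht0, ht1, mem_aux hpos htr hxZ ht0 ht1 htlam⟩
      rw [hta] at this
      linarith
  -- the minimal eigenvector projector
  set u : Fin d → ℂ := ⇑(hpos.isHermitian.eigenvectorBasis i₀) with hu
  set X : Matrix (Fin d) (Fin 1) ℂ := Matrix.of (fun i _ => u i) with hX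
  set x₀ : Matrix (Fin d) (Fin d) ℂ := X * Xᴴ with hx₀
  have hx₀app : ∀ i j, x₀ i j = u i * star (u j) := by
    intro i j
    simp [hx₀, hX, Matrix.mul_apply, Matrix.conjTranspose_apply]
  have hnorm : star u ⬝ᵥ u = 1 := by
    have h1 : ‖hpos.isHermitian.eigenvectorBasis i₀‖ = 1 :=
      hpos.isHermitian.eigenvectorBasis.orthonormal.1 i₀
    have h2 : (inner ℂ (hpos.isHermitian.eigenvectorBasis i₀)
        (hpos.isHermitian.eigenvectorBasis i₀) : ℂ) = star u ⬝ᵥ u :=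
      (EuclideanSpace.inner_eq_star_dotProduct _ _).trans (dotProduct_comm _ _)
    rw [← h2, inner_self_eq_norm_sq_to_K, h1]
    norm_num
  have hx₀psd : x₀.PosSemidef := posSemidef_self_mul_conjTranspose X
  have hx₀tr : x₀.trace = 1 := by
    rw [Matrix.trace, ← hnorm]
    simp only [Matrix.diag]
    rw [show (star u ⬝ᵥ u) = ∑ i, star (u i) * u i from rfl]
    exact Finset.sum_congr rfl fun i _ => by rw [hx₀app, mul_comm]
  have hx₀Z : x₀ ∈ Z := ⟨hx₀psd, hx₀tr⟩
  have hmul : ϱ *ᵥ u = (lam : ℂ) • u := by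
    rw [hu, hpos.isHermitian.mulVec_eigenvectorBasis i₀, ← rsmulV, hi₀]
  have hx₀u : x₀ *ᵥ u = u := by
    funext i
    have : (x₀ *ᵥ u) i = u i * (star u ⬝ᵥ u) := by
      simp only [Matrix.mulVec, dotProduct, hx₀app, Pi.star_apply, Finset.mul_sum]
      exact Finset.sum_congr rfl fun j _ => by ring
    rw [this, hnorm, mul_one]
  have hub : weight Z ϱ x₀ ≤ lam := by
    apply Real.sSup_le _ hlam0
    rintro t ⟨ht0, ht1, hmem⟩
    have hts : (1 : ℝ) - t ≠ 0 := by linarith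
    have hMpsd : (ϱ - (t : ℂ) • x₀).PosSemidef := by
      have h := hmem.1
      rw [rsmulM, rsmulM] at h
      have h2 := csmul_psd (c := 1 - t) (by linarith) h
      rw [smul_smul] at h2
      have : ((1 - t : ℝ) : ℂ) * (((1 - t)⁻¹ : ℝ) : ℂ) = 1 := by
        push_cast
        rw [mul_inv_cancel₀ (by exact_mod_cast hts)]
      rwa [this, one_smul] at h2
    have hq := hMpsd.dotProduct_mulVec_nonneg u
    rw [Matrix.sub_mulVec, hmul, Matrix.smul_mulVec, hx₀u] at hq
    have : star u ⬝ᵥ ((lam : ℂ) • u - (t : ℂ) • u) = ((lam - t : ℝ) : ℂ) := by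
      rw [← sub_smul, dotProduct_smul, hnorm, smul_eq_mul, mul_one]
      push_cast
      ring
    rw [this] at hq
    have := Complex.zero_le_real.1 hq
    linarith
  have hpart1 : bdness Z ϱ = lam := by
    apply le_antisymm
    · exact csInf_le_of_le ⟨0, by rintro y ⟨x, hx, rfl⟩; exact hwnn x⟩ ⟨x₀, hx₀Z, rfl⟩ hub
    · exact le_csInf ⟨_, ⟨ϱ, hϱZ, rfl⟩⟩ (by rintro y ⟨x, hx, rfl⟩; exact hlb x hx)
  refine ⟨hpart1, ?_⟩
  intro hbd
  have hd0 : (d : ℝ) ≠ 0 := Nat.cast_ne_zero.mpr (NeZero.ne d)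
  have hlam_eq : lam = 1 / d := by rw [← hpart1]; exact hbd
  have hall : ∀ i, hpos.isHermitian.eigenvalues i = 1 / d := by
    have hsum := sum_eig_eq_one hpos htr
    have hnn : ∀ i ∈ Finset.univ, (0 : ℝ) ≤ hpos.isHermitian.eigenvalues i - 1 / d :=
      fun i _ => by have := hlam_le i; rw [hlam_eq] at this; linarith
    have hz : ∑ i : Fin d, (hpos.isHermitian.eigenvalues i - 1 / d) = 0 := by
      rw [Finset.sum_sub_distrib, hsum, Finset.sum_const, Finset.card_univ, Fintype.card_fin, nsmul_eq_mul]
      field_simp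
      ring
    intro i
    have := (Finset.sum_eq_zero_iff_of_nonneg hnn).1 hz i (Finset.mem_univ i)
    linarith
  have hU : (hpos.isHermitian.eigenvectorUnitary : Matrix (Fin d) (Fin d) ℂ) *
      star (hpos.isHermitian.eigenvectorUnitary : Matrix (Fin d) (Fin d) ℂ) = 1 :=
    Matrix.mem_unitaryGroup_iff.mp hpos.isHermitian.eigenvectorUnitary.2
  have hdiag : diagonal (RCLike.ofReal ∘ hpos.isHermitian.eigenvalues) =
      ((d : ℂ))⁻¹ • (1 : Matrix (Fin d) (Fin d) ℂ) := by
    ext i j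
    by_cases hij : i = j <;>
      simp [Matrix.diagonal_apply, hij, Matrix.one_apply, Matrix.smul_apply, hall]
  conv_lhs => rw [hpos.isHermitian.spectral_theorem]
  rw [Unitary.conjStarAlgAut_apply, hdiag, Matrix.mul_smul, mul_one, Matrix.smul_mul, hU]
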